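/- Let n ≥ 1 and let T : ℝⁿ → ℝⁿ be monotone and additively homogeneous. Then the following are equivalent: (a) there is no pair (I, J) of disjoint subsets of {1,…,n} such that I is a MIN-dominion for T and J is a MAX-dominion for T; (b) for every g ∈ ℝⁿ there exists λ ∈ ℝ such that for every x ∈ ℝⁿ and every i ∈ {1,…,n}, the sequence k ↦ [(g+T)^k(x)]_i / k converges to λ as k → ∞, where (g+T)^k denotes the k-fold iterate of the map x ↦ g + T(x). -/

import Mathlib

/-- `T` is additively homogeneous: `T(x + c·e) = T(x) + c·e`. -/
def AddHomog (n : ℕ) (T : (Fin n → ℝ) → (Fin n → ℝ)) : Prop :=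
  ∀ (x : Fin n → ℝ) (c : ℝ), T (fun i => x i + c) = fun i => T x i + c

/-- `Δ` is a MIN-dominion for `T`: there is `β` with `T_i(t·e_{Δᶜ}) ≤ β`
for all `i ∈ Δ` and all `t ≥ 0`. -/
def MinDominion (n : ℕ) (T : (Fin n → ℝ) → (Fin n → ℝ)) (Δ : Set (Fin n)) : Prop :=
  Δ.Nonempty ∧ ∃ β : ℝ, ∀ i ∈ Δ, ∀ t : ℝ, 0 ≤ t →
    T (Δᶜ.indicator fun _ => t) i ≤ β

/-- `Δ` is a MAX-dominion for `T`: there is `α` with `T_i(−t·e_{Δᶜ}) ≥ α`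
for all `i ∈ Δ` and all `t ≥ 0`. -/
def MaxDominion (n : ℕ) (T : (Fin n → ℝ) → (Fin n → ℝ)) (Δ : Set (Fin n)) : Prop :=
  Δ.Nonempty ∧ ∃ α : ℝ, ∀ i ∈ Δ, ∀ t : ℝ, 0 ≤ t →
    α ≤ T (Δᶜ.indicator fun _ => -t) i

/-- Hilbert's seminorm `‖x‖_H = max_i x_i − min_i x_i`. -/
noncomputable def hilbertSeminorm (n : ℕ) (x : Fin n → ℝ) : ℝ :=
  (⨆ i, x i) - ⨅ i, x i

/-- The additive slice space `A_α^β(T) = {x : α·e + x ≤ T(x) ≤ β·e + x}`. -/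
def addSliceSpace (n : ℕ) (T : (Fin n → ℝ) → (Fin n → ℝ)) (α β : ℝ) : Set (Fin n → ℝ) :=
  {x | ∀ i, α + x i ≤ T x i ∧ T x i ≤ β + x i}


open Filter

namespace Stmt4Aux

variable {n : ℕ} {S : (Fin n → ℝ) → (Fin n → ℝ)}

lemma le_shift (hmono : Monotone S) (hhom : AddHomog n S)
    {x y : Fin n → ℝ} {c : ℝ} (h : ∀ j, x j ≤ y j + c) (i : Fin n) :
    S x i ≤ S y i + c := by
  have h1 : S x ≤ S (fun j => y j + c) := hmono (fun j => h j)
  have h2 := h1 i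
  rwa [hhom y c] at h2

lemma shift_le (hmono : Monotone S) (hhom : AddHomog n S)
    {x y : Fin n → ℝ} {c : ℝ} (h : ∀ j, y j + c ≤ x j) (i : Fin n) :
    S y i + c ≤ S x i := by
  have h1 : S (fun j => y j + c) ≤ S x := hmono (fun j => h j)
  have h2 := h1 i
  rwa [hhom y c] at h2

lemma slice_shift (hhom : AddHomog n S) {α β : ℝ} {x : Fin n → ℝ}
    (hx : x ∈ addSliceSpace n S α β) (c : ℝ) :
    (fun j => x j + c) ∈ addSliceSpace n S α β := by
  simp only [addSliceSpace, Set.mem_setOf_eq] at hx ⊢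
  intro i
  rw [hhom x c]
  refine ⟨?_, ?_⟩
  · show α + (x i + c) ≤ S x i + c
    linarith [(hx i).1]
  · show S x i + c ≤ β + (x i + c)
    linarith [(hx i).2]

lemma slice_invariant (hmono : Monotone S) (hhom : AddHomog n S) {α β : ℝ} {x : Fin n → ℝ}
    (hx : x ∈ addSliceSpace n S α β) : S x ∈ addSliceSpace n S α β := by
  simp only [addSliceSpace, Set.mem_setOf_eq] at hx ⊢
  intro i
  constructor
  · have := shift_le hmono hhom (x := S x) (y := x) (c := α)
      (fun j => by linarith [(hx j).1]) i
    linarith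
  · have := le_shift hmono hhom (x := S x) (y := x) (c := β)
      (fun j => by linarith [(hx j).2]) i
    linarith

lemma iterate_le_shift (hmono : Monotone S) (hhom : AddHomog n S)
    {x y : Fin n → ℝ} {c : ℝ} (h : ∀ j, x j ≤ y j + c) (k : ℕ) :
    ∀ i, S^[k] x i ≤ S^[k] y i + c := by
  induction k with
  | zero => simpa using h
  | succ k ih =>
      intro i
      rw [Function.iterate_succ_apply', Function.iterate_succ_apply']
      exact le_shift hmono hhom ih i

lemma iterate_shift_le (hmono : Monotone S) (hhom : AddHomog n S)
    {x y : Fin n → ℝ} {c : ℝ} (h : ∀ j, y j + c ≤ x j) (k : ℕ) :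
    ∀ i, S^[k] y i + c ≤ S^[k] x i := by
  induction k with
  | zero => simpa using h
  | succ k ih =>
      intro i
      rw [Function.iterate_succ_apply', Function.iterate_succ_apply']
      have h1 : S (fun j => S^[k] y j + c) ≤ S (S^[k] x) := hmono (fun j => ih j)
      have h2 := h1 i
      rwa [hhom (S^[k] y) c] at h2

lemma ergodic_of_bounded_spread (hn1 : 1 ≤ n) (hmono : Monotone S) (hhom : AddHomog n S)
    {R : ℝ} (hR : ∀ k : ℕ, (⨆ i, S^[k] 0 i) - (⨅ i, S^[k] 0 i) ≤ R) :
    ∃ lam : ℝ, ∀ (x : Fin n → ℝ) (i : Fin n),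
      Tendsto (fun k : ℕ => (S^[k] x) i / k) atTop (nhds lam) := by
  haveI : Nonempty (Fin n) := ⟨⟨0, hn1⟩⟩
  set a : ℕ → ℝ := fun k => ⨆ i, S^[k] 0 i with ha_def
  set b : ℕ → ℝ := fun k => ⨅ i, S^[k] 0 i with hb_def
  have hxa : ∀ k i, S^[k] (0 : Fin n → ℝ) i ≤ a k :=
    fun k i => le_ciSup (Set.finite_range _).bddAbove i
  have hbx : ∀ k i, b k ≤ S^[k] (0 : Fin n → ℝ) i :=
    fun k i => ciInf_le (Set.finite_range _).bddBelow i
  have hba : ∀ k, b k ≤ a k := fun k =>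
    le_trans (hbx k (Classical.arbitrary _)) (hxa k (Classical.arbitrary _))
  have ha0 : a 0 = 0 := by simp [ha_def]
  have hb0 : b 0 = 0 := by simp [hb_def]
  have hsub : Subadditive a := by
    intro m k
    have key : ∀ i, S^[m + k] (0 : Fin n → ℝ) i ≤ S^[m] 0 i + a k := by
      intro i
      rw [Function.iterate_add_apply]
      exact iterate_le_shift hmono hhom (fun j => by simpa using hxa k j) m i
    exact ciSup_le fun i => le_trans (key i) (add_le_add_left (hxa m i) _)
  have hsuper : ∀ m k, b m + b k ≤ b (m + k) := by
    intro m k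
    have key : ∀ i, S^[m] (0 : Fin n → ℝ) i + b k ≤ S^[m + k] 0 i := by
      intro i
      rw [Function.iterate_add_apply]
      have h : ∀ j, (0 : Fin n → ℝ) j + b k ≤ S^[k] (0 : Fin n → ℝ) j := by
        intro j; simpa using hbx k j
      exact iterate_shift_le hmono hhom (x := S^[k] 0) (y := 0) (c := b k)
        (fun j => by simpa using hbx k j) m i
    exact le_ciInf fun i => le_trans (add_le_add_left (hbx m i) _) (key i)
  have hbk : ∀ k : ℕ, (k : ℝ) * b 1 ≤ b k := by
    intro k
    induction k with
    | zero => simp [hb0]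
    | succ k ih =>
        calc ((k + 1 : ℕ) : ℝ) * b 1 = (k : ℝ) * b 1 + b 1 := by push_cast; ring
        _ ≤ b k + b 1 := add_le_add_left ih _
        _ ≤ b (k + 1) := hsuper k 1
  have hbdd : BddBelow (Set.range fun k : ℕ => a k / k) := by
    refine ⟨min (b 1) 0, ?_⟩
    rintro _ ⟨k, rfl⟩
    rcases Nat.eq_zero_or_pos k with hk | hk
    · subst hk; simpa [ha0] using min_le_right (b 1) 0
    · have hk' : (0 : ℝ) < (k : ℝ) := Nat.cast_pos.mpr hk
      have h1 : (k : ℝ) * b 1 ≤ a k := le_trans (hbk k) (hba k)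
      have h2 : b 1 ≤ a k / k := by
        rw [le_div_iff₀ hk']
        linarith [mul_comm (k : ℝ) (b 1)]
      exact le_trans (min_le_left _ _) h2
  have hlim := hsub.tendsto_lim hbdd
  refine ⟨hsub.lim, ?_⟩
  have hbtend : Tendsto (fun k : ℕ => b k / k) atTop (nhds hsub.lim) := by
    have hlow : Tendsto (fun k : ℕ => a k / k - R / k) atTop (nhds hsub.lim) := by
      simpa using hlim.sub (tendsto_const_div_atTop_nhds_zero_nat R)
    refine tendsto_of_tendsto_of_tendsto_of_le_of_le' hlow hlim ?_ ?_
    · filter_upwards [eventually_ge_atTop 1] with k hk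
      have hk' : (0 : ℝ) < (k : ℝ) := by positivity
      rw [← sub_div]
      exact (div_le_div_iff_of_pos_right hk').mpr (by linarith [hR k])
    · filter_upwards [eventually_ge_atTop 1] with k hk
      have hk' : (0 : ℝ) < (k : ℝ) := by positivity
      exact (div_le_div_iff_of_pos_right hk').mpr (hba k)
  intro x i
  set cmax : ℝ := ⨆ j, x j with hcmax
  set cmin : ℝ := ⨅ j, x j with hcmin
  have hup : ∀ k, S^[k] x i ≤ a k + cmax := by
    intro k
    have := iterate_le_shift hmono hhom (x := x) (y := 0) (c := cmax)
      (fun j => by simpa using le_ciSup (Set.finite_range x).bddAbove j) k i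
    exact le_trans this (add_le_add_left (hxa k i) _)
  have hdn : ∀ k, b k + cmin ≤ S^[k] x i := by
    intro k
    have := iterate_shift_le hmono hhom (x := x) (y := 0) (c := cmin)
      (fun j => by simpa using ciInf_le (Set.finite_range x).bddBelow j) k i
    exact le_trans (add_le_add_left (hbx k i) _) this
  have hlo : Tendsto (fun k : ℕ => (b k + cmin) / k) atTop (nhds hsub.lim) := by
    simp only [add_div]
    simpa using hbtend.add (tendsto_const_div_atTop_nhds_zero_nat cmin)
  have hhi : Tendsto (fun k : ℕ => (a k + cmax) / k) atTop (nhds hsub.lim) := by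
    simp only [add_div]
    simpa using hlim.add (tendsto_const_div_atTop_nhds_zero_nat cmax)
  refine tendsto_of_tendsto_of_tendsto_of_le_of_le' hlo hhi ?_ ?_
  · filter_upwards [eventually_ge_atTop 1] with k hk
    have hk' : (0 : ℝ) < (k : ℝ) := by positivity
    exact (div_le_div_iff_of_pos_right hk').mpr (hdn k)
  · filter_upwards [eventually_ge_atTop 1] with k hk
    have hk' : (0 : ℝ) < (k : ℝ) := by positivity
    exact (div_le_div_iff_of_pos_right hk').mpr (hup k)

lemma not_ergodic_of_dominions (hn1 : 1 ≤ n) {T : (Fin n → ℝ) → (Fin n → ℝ)}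
    (hmono : Monotone T) (hhom : AddHomog n T)
    {I J : Set (Fin n)} (hIJ : Disjoint I J) (hI : MinDominion n T I) (hJ : MaxDominion n T J) :
    ¬ (∀ g : Fin n → ℝ, ∃ lam : ℝ, ∀ (x : Fin n → ℝ) (i : Fin n),
        Filter.Tendsto (fun k : ℕ => ((fun y => fun j => g j + T y j)^[k] x) i / k)
          Filter.atTop (nhds lam)) := by
  obtain ⟨⟨i0, hi0⟩, β₀, hβ₀⟩ := hI
  obtain ⟨⟨j0, hj0⟩, α₀, hα₀⟩ := hJ
  intro hb
  set c : ℝ := max (β₀ - α₀ + 1) 0 with hc_def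
  have hc0 : 0 ≤ c := le_max_right _ _
  have hc1 : β₀ + 1 ≤ c + α₀ := by
    rcases le_max_iff.mpr (Or.inl (le_refl (β₀ - α₀ + 1))) with h
    linarith [le_max_left (β₀ - α₀ + 1) (0:ℝ)]
  set g : Fin n → ℝ := Set.indicator Iᶜ (fun _ => c) with hg_def
  have hgI : ∀ i ∈ I, g i = 0 := by
    intro i hi
    simp [hg_def, Set.indicator_of_notMem, hi]
  have hgJ : ∀ j ∈ J, g j = c := by
    intro j hj
    have : j ∈ Iᶜ := fun hjI => (Set.disjoint_left.mp hIJ hjI) hj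
    simp [hg_def, Set.indicator_of_mem this]
  have hg_nonneg : ∀ l, 0 ≤ g l := by
    intro l
    by_cases hl : l ∈ Iᶜ <;> simp [hg_def, hl, hc0]
  have hg_le : ∀ l, g l ≤ c := by
    intro l
    by_cases hl : l ∈ Iᶜ <;> simp [hg_def, hl, hc0]
  set S : (Fin n → ℝ) → (Fin n → ℝ) := fun y => fun j => g j + T y j with hS_def
  have hmonoS : Monotone S := by
    intro y z hyz j
    exact add_le_add_right (hmono hyz j) _
  have hhomS : AddHomog n S := by
    intro x c'
    funext i
    simp only [hS_def]
    rw [hhom x c']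
    ring
  set u : ℕ → (Fin n → ℝ) := fun k => S^[k] 0 with hu_def
  have hu_succ : ∀ k i, u (k + 1) i = g i + T (u k) i := by
    intro k i
    simp only [hu_def, Function.iterate_succ_apply']
    rfl
  set MT : ℝ := ⨆ i, T 0 i with hMT
  set mT : ℝ := ⨅ i, T 0 i with hmT
  haveI : Nonempty (Fin n) := ⟨⟨0, hn1⟩⟩
  set a : ℝ := β₀ with ha_def
  set b : ℝ := max (c + MT) β₀ with hb_def
  have hab : a ≤ b := le_max_right _ _
  set a' : ℝ := c + α₀ with ha'_def
  set b' : ℝ := min mT a' with hb'_def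
  have ha'b' : b' ≤ a' := min_le_right _ _
  -- P1 : global upper bound
  have P1 : ∀ k l, u k l ≤ k * b := by
    intro k
    induction k with
    | zero => intro l; simp [hu_def]
    | succ k ih =>
        intro l
        rw [hu_succ k l]
        have h1 : T (u k) l ≤ T 0 l + k * b :=
          le_shift hmono hhom (fun j => by simpa using ih j) l
        have h2 : T 0 l ≤ MT := le_ciSup (Set.finite_range _).bddAbove l
        have h3 : c + MT ≤ b := le_max_left _ _
        have := hg_le l
        push_cast
        nlinarith
  -- P3 : global lower bound
  have P3 : ∀ (k : ℕ) (l : Fin n), (k : ℝ) * b' ≤ u k l := by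
    intro k
    induction k with
    | zero => intro l; simp [hu_def]
    | succ k ih =>
        intro l
        rw [hu_succ k l]
        have h1 : T 0 l + k * b' ≤ T (u k) l :=
          shift_le hmono hhom (fun j => by simpa using ih j) l
        have h2 : mT ≤ T 0 l := ciInf_le (Set.finite_range _).bddBelow l
        have h3 : b' ≤ mT := min_le_left _ _
        have := hg_nonneg l
        push_cast
        nlinarith
  -- P2 : upper bound on I
  have P2 : ∀ k, ∀ i ∈ I, u k i ≤ k * a := by
    intro k
    induction k with
    | zero => intro i _; simp [hu_def]
    | succ k ih =>
        intro i hi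
        rw [hu_succ k i, hgI i hi]
        have ht : (0 : ℝ) ≤ (k : ℝ) * (b - a) := by
          have : (0:ℝ) ≤ (k:ℝ) := Nat.cast_nonneg k
          nlinarith
        have hcmp : ∀ j, u k j ≤ (Iᶜ.indicator fun _ => (k : ℝ) * (b - a)) j + k * a := by
          intro j
          by_cases hj : j ∈ I
          · simp only [Set.indicator_of_notMem (by simpa using hj : j ∉ Iᶜ)]
            simpa using ih j hj
          · simp only [Set.indicator_of_mem (by simpa using hj : j ∈ Iᶜ)]
            have := P1 k j
            push_cast
            nlinarith
        have h1 : T (u k) i ≤ T (Iᶜ.indicator fun _ => (k : ℝ) * (b - a)) i + k * a :=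
          le_shift hmono hhom hcmp i
        have h2 := hβ₀ i hi ((k : ℝ) * (b - a)) ht
        push_cast
        nlinarith
  -- P4 : lower bound on J
  have P4 : ∀ (k : ℕ), ∀ j ∈ J, (k : ℝ) * a' ≤ u k j := by
    intro k
    induction k with
    | zero => intro j _; simp [hu_def]
    | succ k ih =>
        intro j hj
        rw [hu_succ k j, hgJ j hj]
        have ht : (0 : ℝ) ≤ (k : ℝ) * (a' - b') := by
          have : (0:ℝ) ≤ (k:ℝ) := Nat.cast_nonneg k
          nlinarith
        have hcmp : ∀ l, (Jᶜ.indicator fun _ => -((k : ℝ) * (a' - b'))) l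
            + ((k : ℝ) * (a' - b') + (k : ℝ) * b') ≤ u k l := by
          intro l
          by_cases hl : l ∈ J
          · simp only [Set.indicator_of_notMem (by simpa using hl : l ∉ Jᶜ)]
            have := ih l hl
            nlinarith
          · simp only [Set.indicator_of_mem (by simpa using hl : l ∈ Jᶜ)]
            have := P3 k l
            nlinarith
        have h1 : T (Jᶜ.indicator fun _ => -((k : ℝ) * (a' - b'))) j
            + ((k : ℝ) * (a' - b') + (k : ℝ) * b') ≤ T (u k) j :=
          shift_le hmono hhom hcmp j
        have h2 := hα₀ j hj ((k : ℝ) * (a' - b')) ht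
        push_cast
        nlinarith
  obtain ⟨lam, hlam⟩ := hb g
  have htend0 : ∀ i, Tendsto (fun k : ℕ => u k i / k) atTop (nhds lam) := by
    intro i
    exact hlam 0 i
  have hlam_le : lam ≤ a := by
    refine le_of_tendsto (htend0 i0) ?_
    filter_upwards [eventually_ge_atTop 1] with k hk
    have hk' : (0 : ℝ) < (k : ℝ) := by positivity
    rw [div_le_iff₀ hk']
    have := P2 k i0 hi0
    nlinarith
  have hle_lam : a' ≤ lam := by
    refine ge_of_tendsto (htend0 j0) ?_
    filter_upwards [eventually_ge_atTop 1] with k hk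
    have hk' : (0 : ℝ) < (k : ℝ) := by positivity
    rw [le_div_iff₀ hk']
    have := P4 k j0 hj0
    nlinarith
  have : a + 1 ≤ a' := by simp only [ha_def, ha'_def]; linarith
  linarith

lemma dominions_of_unbounded (hn1 : 1 ≤ n) (hmono : Monotone S) (hhom : AddHomog n S)
    {α β : ℝ}
    (hub : ∀ M : ℝ, ∃ x ∈ addSliceSpace n S α β,
      M ≤ (⨆ i, x i) - ⨅ i, x i) :
    ∃ I J : Set (Fin n), Disjoint I J ∧ MinDominion n S I ∧ MaxDominion n S J := by
  classical
  haveI : Nonempty (Fin n) := ⟨⟨0, hn1⟩⟩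
  -- n ≥ 2
  rcases Nat.lt_or_ge n 2 with hn2 | hn2
  · exfalso
    have hn1' : n = 1 := by omega
    subst hn1'
    obtain ⟨x, -, hx⟩ := hub 1
    haveI : Unique (Fin 1) := inferInstance
    rw [ciSup_unique, ciInf_unique] at hx
    linarith
  -- Step A : fix a sorting permutation
  obtain ⟨σ, hσ⟩ : ∃ σ : Equiv.Perm (Fin n), ∀ M : ℝ, ∃ x ∈ addSliceSpace n S α β,
      Monotone (x ∘ σ) ∧ M ≤ (⨆ i, x i) - ⨅ i, x i := by
    by_contra hcon
    push_neg at hcon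
    choose Mf hMf using hcon
    haveI : Nonempty (Equiv.Perm (Fin n)) := ⟨1⟩
    obtain ⟨x, hxA, hx⟩ := hub (⨆ τ, Mf τ)
    have hm := Tuple.monotone_sort x
    have h1 := hMf (Tuple.sort x) x hxA hm
    have h2 : Mf (Tuple.sort x) ≤ ⨆ τ, Mf τ :=
      le_ciSup (Set.finite_range Mf).bddAbove _
    linarith
  -- sorted coordinate function, totalized
  have hlt : ∀ k : ℕ, min k (n - 1) < n := fun k => by omega
  set ff : (Fin n → ℝ) → ℕ → ℝ := fun x k => x (σ ⟨min k (n - 1), hlt k⟩) with hff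
  have hffmono : ∀ x : Fin n → ℝ, Monotone (x ∘ σ) → ∀ p q : ℕ, p ≤ q → ff x p ≤ ff x q := by
    intro x hmx p q hpq
    exact hmx (by simp only [Fin.mk_le_mk]; omega)
  have hffval : ∀ (x : Fin n → ℝ) (k : ℕ) (hk : k ≤ n - 1), ff x k = x (σ ⟨k, by omega⟩) := by
    intro x k hk
    have hmk : min k (n - 1) = k := by omega
    simp only [hff, hmk]
  -- upper bound on coordinates : x j ≤ ff x (n-1), lower : ff x 0 ≤ x j
  have hcoord_le : ∀ (x : Fin n → ℝ), Monotone (x ∘ σ) → ∀ (j : Fin n) (k : ℕ),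
      (σ.symm j : ℕ) ≤ k → x j ≤ ff x k := by
    intro x hmx j k hjk
    have h1 : x j = (x ∘ σ) (σ.symm j) := by simp
    rw [h1]
    have := hmx (show σ.symm j ≤ ⟨min k (n-1), hlt k⟩ by
      simp only [Fin.le_def]
      have := (σ.symm j).isLt
      omega)
    exact this
  have hle_coord : ∀ (x : Fin n → ℝ), Monotone (x ∘ σ) → ∀ (j : Fin n) (k : ℕ),
      k ≤ (σ.symm j : ℕ) → k ≤ n - 1 → ff x k ≤ x j := by
    intro x hmx j k hjk hk
    have h1 : x j = (x ∘ σ) (σ.symm j) := by simp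
    rw [h1]
    exact hmx (show (⟨min k (n-1), hlt k⟩ : Fin n) ≤ σ.symm j by
      simp only [Fin.le_def]
      omega)
  -- spread bounded by ff difference
  have hspread : ∀ (x : Fin n → ℝ), Monotone (x ∘ σ) →
      (⨆ i, x i) - (⨅ i, x i) ≤ ff x (n - 1) - ff x 0 := by
    intro x hmx
    have h1 : (⨆ i, x i) ≤ ff x (n - 1) :=
      ciSup_le fun i => hcoord_le x hmx i (n-1) (by have := (σ.symm i).isLt; omega)
    have h2 : ff x 0 ≤ ⨅ i, x i :=
      le_ciInf fun i => hle_coord x hmx i 0 (Nat.zero_le _) (Nat.zero_le _)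
    linarith
  set gap : (Fin n → ℝ) → ℕ → ℝ := fun x k => ff x (k + 1) - ff x k with hgap
  have htel : ∀ (x : Fin n → ℝ) (m : ℕ), ∑ k ∈ Finset.range m, gap x k = ff x m - ff x 0 :=
    fun x m => Finset.sum_range_sub (f := ff x) m
  -- the unboundedness predicate for an individual gap
  set U : ℕ → Prop := fun k => ∀ M : ℝ, ∃ x ∈ addSliceSpace n S α β,
      Monotone (x ∘ σ) ∧ M ≤ gap x k with hU
  -- bounds for gaps that are not unbounded
  have hBex : ∀ k : ℕ, ∃ Mk : ℝ, ¬ U k → ∀ x ∈ addSliceSpace n S α β,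
      Monotone (x ∘ σ) → gap x k ≤ Mk := by
    intro k
    by_cases hk : U k
    · exact ⟨0, fun h => absurd hk h⟩
    · have hk' := hk
      simp only [hU] at hk'
      push_neg at hk'
      obtain ⟨M, hM⟩ := hk'
      exact ⟨M, fun _ x hx hmx => (hM x hx hmx).le⟩
  choose B hB using hBex
  -- some gap is unbounded
  have hUex : ∃ k ∈ Finset.range (n - 1), U k := by
    by_contra hcon
    push_neg at hcon
    obtain ⟨x, hxA, hmx, hx⟩ := hσ ((∑ k ∈ Finset.range (n - 1), B k) + 1)
    have h1 : ∑ k ∈ Finset.range (n - 1), gap x k ≤ ∑ k ∈ Finset.range (n - 1), B k :=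
      Finset.sum_le_sum fun k hk => hB k (hcon k hk) x hxA hmx
    have h2 := htel x (n - 1)
    have h3 := hspread x hmx
    linarith
  obtain ⟨kU, hkUmem, hkU⟩ := hUex
  set K : Finset ℕ := (Finset.range (n - 1)).filter U with hK
  have hKne : K.Nonempty := ⟨kU, Finset.mem_filter.mpr ⟨hkUmem, hkU⟩⟩
  set k1 : ℕ := K.min' hKne with hk1
  set k2 : ℕ := K.max' hKne with hk2
  have hk1K : k1 ∈ K := K.min'_mem hKne
  have hk2K : k2 ∈ K := K.max'_mem hKne
  have hk1U : U k1 := (Finset.mem_filter.mp hk1K).2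
  have hk2U : U k2 := (Finset.mem_filter.mp hk2K).2
  have hk12 : k1 ≤ k2 := K.min'_le k2 hk2K
  have hk2n : k2 < n - 1 := Finset.mem_range.mp (Finset.mem_filter.mp hk2K).1
  have hk1n : k1 < n - 1 := lt_of_le_of_lt hk12 hk2n
  -- bounded gaps outside [k1, k2]
  have hnotU_lo : ∀ k, k < k1 → ¬ U k := by
    intro k hk hUk
    have : k ∈ K := Finset.mem_filter.mpr ⟨Finset.mem_range.mpr (by omega), hUk⟩
    have := K.min'_le k this
    omega
  have hnotU_hi : ∀ k, k2 < k → k < n - 1 → ¬ U k := by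
    intro k hk hk' hUk
    have : k ∈ K := Finset.mem_filter.mpr ⟨Finset.mem_range.mpr hk', hUk⟩
    have := K.le_max' k this
    omega
  set Cbot : ℝ := ∑ k ∈ Finset.range k1, B k with hCbot
  set Ctop : ℝ := ∑ k ∈ Finset.Ico (k2 + 1) (n - 1), B k with hCtop
  -- bottom internal spread
  have hbot : ∀ x ∈ addSliceSpace n S α β, Monotone (x ∘ σ) → ff x k1 - ff x 0 ≤ Cbot := by
    intro x hxA hmx
    rw [← htel x k1]
    exact Finset.sum_le_sum fun k hk =>
      hB k (hnotU_lo k (Finset.mem_range.mp hk)) x hxA hmx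
  -- top internal spread
  have htop : ∀ x ∈ addSliceSpace n S α β, Monotone (x ∘ σ) →
      ff x (n - 1) - ff x (k2 + 1) ≤ Ctop := by
    intro x hxA hmx
    have e1 : ∑ k ∈ Finset.Ico (k2 + 1) (n - 1), gap x k = ff x (n - 1) - ff x (k2 + 1) := by
      rw [Finset.sum_Ico_eq_sub _ (by omega : k2 + 1 ≤ n - 1), htel x (n - 1), htel x (k2 + 1)]
      ring
    rw [← e1]
    exact Finset.sum_le_sum fun k hk =>
      hB k (hnotU_hi k (Finset.mem_Ico.mp hk).1 (Finset.mem_Ico.mp hk).2) x hxA hmx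
  -- the dominions
  refine ⟨{i : Fin n | (σ.symm i : ℕ) ≤ k1}, {i : Fin n | k2 < (σ.symm i : ℕ)}, ?_, ?_, ?_⟩
  · rw [Set.disjoint_left]
    intro i hi1 hi2
    simp only [Set.mem_setOf_eq] at hi1 hi2
    omega
  · -- MIN dominion on the bottom block
    refine ⟨⟨σ ⟨0, by omega⟩, by simp⟩, β + max Cbot 0, ?_⟩
    intro i hi t ht
    simp only [Set.mem_setOf_eq] at hi
    obtain ⟨x, hxA, hmx, hx⟩ := hk1U t
    set z : Fin n → ℝ := fun j => x j + -(x (σ ⟨k1, by omega⟩)) with hz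
    have hzA : z ∈ addSliceSpace n S α β := slice_shift hhom hxA _
    have hzk1 : ∀ j : Fin n, (σ.symm j : ℕ) ≤ k1 → z j ≤ 0 := by
      intro j hj
      have := hcoord_le x hmx j k1 hj
      rw [hffval x k1 (by omega)] at this
      simp only [hz]
      linarith
    have hcmp : ∀ j, ({i : Fin n | (σ.symm i : ℕ) ≤ k1}ᶜ.indicator fun _ => t) j
        ≤ z j + max Cbot 0 := by
      intro j
      by_cases hj : (σ.symm j : ℕ) ≤ k1
      · rw [Set.indicator_of_notMem (by simpa using hj)]
        have h1 := hle_coord x hmx j 0 (Nat.zero_le _) (Nat.zero_le _)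
        have h2 := hbot x hxA hmx
        rw [hffval x k1 (by omega)] at h2
        have h3 : Cbot ≤ max Cbot 0 := le_max_left _ _
        simp only [hz]
        simp only [hffval x 0 (Nat.zero_le _)] at h1 h2
        linarith
      · rw [Set.indicator_of_mem (by simpa using hj)]
        have h1 := hle_coord x hmx j (k1 + 1) (by omega) (by omega)
        have h2 : ff x k1 + t ≤ ff x (k1 + 1) := by
          have := hx
          simp only [hgap] at this
          linarith
        rw [hffval x k1 (by omega)] at h2
        rw [hffval x (k1+1) (by omega)] at h1 h2
        have h3 : (0:ℝ) ≤ max Cbot 0 := le_max_right _ _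
        simp only [hz]
        linarith
    have h1 := le_shift hmono hhom hcmp i
    have h2 := (hzA i).2
    have h3 := hzk1 i hi
    linarith
  · -- MAX dominion on the top block
    refine ⟨⟨σ ⟨k2 + 1, by omega⟩, by simp⟩, α - max Ctop 0, ?_⟩
    intro i hi t ht
    simp only [Set.mem_setOf_eq] at hi
    obtain ⟨x, hxA, hmx, hx⟩ := hk2U t
    set z : Fin n → ℝ := fun j => x j + -(x (σ ⟨k2 + 1, by omega⟩)) with hz
    have hzA : z ∈ addSliceSpace n S α β := slice_shift hhom hxA _
    have hzk2 : ∀ j : Fin n, k2 < (σ.symm j : ℕ) → 0 ≤ z j := by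
      intro j hj
      have := hle_coord x hmx j (k2 + 1) (by omega) (by omega)
      rw [hffval x (k2+1) (by omega)] at this
      simp only [hz]
      linarith
    have hcmp : ∀ j, z j ≤ ({i : Fin n | k2 < (σ.symm i : ℕ)}ᶜ.indicator fun _ => -t) j
        + max Ctop 0 := by
      intro j
      by_cases hj : k2 < (σ.symm j : ℕ)
      · rw [Set.indicator_of_notMem (by simpa using hj)]
        have h1 := hcoord_le x hmx j (n - 1) (by have := (σ.symm j).isLt; omega)
        have h2 := htop x hxA hmx
        rw [hffval x (k2+1) (by omega)] at h2
        have h3 : Ctop ≤ max Ctop 0 := le_max_left _ _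
        simp only [hz]
        linarith
      · rw [Set.indicator_of_mem (by simpa using hj)]
        have h1 := hcoord_le x hmx j k2 (by omega)
        have h2 : ff x k2 + t ≤ ff x (k2 + 1) := by
          have := hx
          simp only [hgap] at this
          linarith
        rw [hffval x k2 (by omega)] at h1 h2
        rw [hffval x (k2+1) (by omega)] at h2
        have h3 : (0:ℝ) ≤ max Ctop 0 := le_max_right _ _
        simp only [hz]
        linarith
    have h1 := le_shift hmono hhom hcmp i
    have h2 := (hzA i).1
    have h3 := hzk2 i hi
    linarith

-- transfer of dominions between T and g + T
lemma minDominion_transfer (hn1 : 1 ≤ n) {T : (Fin n → ℝ) → (Fin n → ℝ)} {g : Fin n → ℝ}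
    {Δ : Set (Fin n)} (h : MinDominion n (fun y => fun j => g j + T y j) Δ) :
    MinDominion n T Δ := by
  haveI : Nonempty (Fin n) := ⟨⟨0, hn1⟩⟩
  obtain ⟨hne, β, hβ⟩ := h
  refine ⟨hne, β - ⨅ j, g j, ?_⟩
  intro i hi t ht
  have h1 := hβ i hi t ht
  have h2 : (⨅ j, g j) ≤ g i := ciInf_le (Set.finite_range g).bddBelow i
  simp only [] at h1
  linarith

lemma maxDominion_transfer (hn1 : 1 ≤ n) {T : (Fin n → ℝ) → (Fin n → ℝ)} {g : Fin n → ℝ}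
    {Δ : Set (Fin n)} (h : MaxDominion n (fun y => fun j => g j + T y j) Δ) :
    MaxDominion n T Δ := by
  haveI : Nonempty (Fin n) := ⟨⟨0, hn1⟩⟩
  obtain ⟨hne, α, hα⟩ := h
  refine ⟨hne, α - ⨆ j, g j, ?_⟩
  intro i hi t ht
  have h1 := hα i hi t ht
  have h2 : g i ≤ ⨆ j, g j := le_ciSup (Set.finite_range g).bddAbove i
  simp only [] at h1
  linarith


end Stmt4Aux

theorem stmt4 (n : ℕ) (hn : 1 ≤ n)
    (T : (Fin n → ℝ) → (Fin n → ℝ))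
    (hmono : Monotone T) (hhom : AddHomog n T) :
    (¬ ∃ I J : Set (Fin n),
        Disjoint I J ∧ MinDominion n T I ∧ MaxDominion n T J) ↔
    (∀ g : Fin n → ℝ, ∃ lam : ℝ, ∀ (x : Fin n → ℝ) (i : Fin n),
        Filter.Tendsto (fun k : ℕ => ((fun y => fun j => g j + T y j)^[k] x) i / k)
          Filter.atTop (nhds lam)) := by
  haveI : Nonempty (Fin n) := ⟨⟨0, hn⟩⟩
  constructor
  · intro ha g
    set S : (Fin n → ℝ) → (Fin n → ℝ) := fun y => fun j => g j + T y j with hS_def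
    have hmonoS : Monotone S := fun y z hyz j => add_le_add_right (hmono hyz j) _
    have hhomS : AddHomog n S := by
      intro x c
      funext i
      simp only [hS_def]
      rw [hhom x c]
      ring
    set α : ℝ := ⨅ i, S 0 i with hα
    set β : ℝ := ⨆ i, S 0 i with hβ
    have h0A : (0 : Fin n → ℝ) ∈ addSliceSpace n S α β := by
      intro i
      constructor
      · simpa using ciInf_le (Set.finite_range _).bddBelow i
      · simpa using le_ciSup (Set.finite_range _).bddAbove i
    have hbounded : ¬ (∀ M : ℝ, ∃ x ∈ addSliceSpace n S α β,
        M ≤ (⨆ i, x i) - ⨅ i, x i) := by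
      intro hub
      obtain ⟨I, J, hIJ, hminS, hmaxS⟩ :=
        Stmt4Aux.dominions_of_unbounded hn hmonoS hhomS hub
      exact ha ⟨I, J, hIJ, Stmt4Aux.minDominion_transfer hn hminS,
        Stmt4Aux.maxDominion_transfer hn hmaxS⟩
    push_neg at hbounded
    obtain ⟨R, hR⟩ := hbounded
    have horb : ∀ k : ℕ, S^[k] 0 ∈ addSliceSpace n S α β := by
      intro k
      induction k with
      | zero => exact h0A
      | succ k ih =>
          rw [Function.iterate_succ_apply']
          exact Stmt4Aux.slice_invariant hmonoS hhomS ih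
    have hRk : ∀ k : ℕ, (⨆ i, S^[k] 0 i) - (⨅ i, S^[k] 0 i) ≤ R :=
      fun k => (hR _ (horb k)).le
    obtain ⟨lam, hlam⟩ := Stmt4Aux.ergodic_of_bounded_spread hn hmonoS hhomS hRk
    exact ⟨lam, hlam⟩
  · rintro hb ⟨I, J, hIJ, hI, hJ⟩
    exact Stmt4Aux.not_ergodic_of_dominions hn hmono hhom hIJ hI hJ hb
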